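/- For all even n ≥ 6 with 𝐬 = 𝐧_{n/2}, and for all odd n = 2m+1 ≥ 7 with 𝐬 ∈ {𝐧_m, 𝐧_{m+1}, 𝐧_{m,m+1}}: |λ_{n,2,𝐬}| ≤ e^{−n} and |λ_{n,4,𝐬}| ≤ (1/2)e^{−n}. Moreover, for all odd n = 2m+1 ≥ 7: |λ̄_{n,2,𝐧_m}| ≤ e^{−n} and |λ̄_{n,4,𝐧_m}| ≤ (1/2)e^{−n}, where λ̄_{n,b,𝐧_m} = (Π_{1≤r≤n, r∉{m,m+1}} λ_{n,b,r})·(λ_{n,b,m} + λ_{n,b,m+1})/2. -/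

import Mathlib

open Finset

/-- `λ_{n,b,s} = ∑_{t=0}^{b} C(b,t) (−2)^t (s)_t/(n)_t`. -/
noncomputable def lam (n b s : ℕ) : ℝ :=
  ∑ t ∈ Finset.range (b + 1),
    (b.choose t : ℝ) * (-2 : ℝ) ^ t * (s.descFactorial t : ℝ) / (n.descFactorial t : ℝ)

/-- `λ_{n,b,𝐧_l}`, where `𝐧_l` is the pattern `(1,…,n)` with the entry `l` deleted. -/
noncomputable def lamDel (n b l : ℕ) : ℝ := ∏ r ∈ (Finset.Icc 1 n).erase l, lam n b r

/-- `λ_{n,b,𝐧_{l₁,l₂}}`, where `𝐧_{l₁,l₂}` is `(1,…,n)` with entries `l₁, l₂` deleted. -/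
noncomputable def lamDel2 (n b l₁ l₂ : ℕ) : ℝ :=
  ∏ r ∈ ((Finset.Icc 1 n).erase l₁).erase l₂, lam n b r

/-- `λ̄_{n,b,𝐧_m} = (Π_{1≤r≤n, r∉{m,m+1}} λ_{n,b,r})·(λ_{n,b,m} + λ_{n,b,m+1})/2`. -/
noncomputable def lamBarDel (n b m : ℕ) : ℝ :=
  (∏ r ∈ Finset.Icc 1 n \ {m, m + 1}, lam n b r) * ((lam n b m + lam n b (m + 1)) / 2)

namespace LBaux

noncomputable def hfun (q : ℝ) : ℝ := q + q^2/2 + q^3/3 + q^4/4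
noncomputable def hfun2 (q : ℝ) : ℝ := q + q^2/2

lemma key4 (q : ℝ) (h0 : 0 ≤ q) (h1 : q ≤ 1) :
    1 - q ≤ Real.exp (-(hfun q)) := by
  have hF : ∀ x : ℝ, HasDerivAt (fun x : ℝ => (1-x) * Real.exp (x + x^2/2 + x^3/3 + x^4/4))
      (-(x^4) * Real.exp (x + x^2/2 + x^3/3 + x^4/4)) x := by
    intro x
    have h1 : HasDerivAt (fun x : ℝ => x + x^2/2 + x^3/3 + x^4/4) (1 + x + x^2 + x^3) x := by
      have := ((hasDerivAt_id x).add (((hasDerivAt_pow 2 x).div_const 2))).add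
        ((hasDerivAt_pow 3 x).div_const 3) |>.add ((hasDerivAt_pow 4 x).div_const 4)
      exact this.congr_deriv (by push_cast; ring)
    have h3 : HasDerivAt (fun x : ℝ => 1 - x) (-1) x := by
      simpa using (hasDerivAt_id x).const_sub 1
    have := h3.mul h1.exp
    exact this.congr_deriv (by ring)
  have anti : AntitoneOn (fun x : ℝ => (1-x) * Real.exp (x + x^2/2 + x^3/3 + x^4/4)) (Set.Icc 0 1) := by
    apply antitoneOn_of_deriv_nonpos (convex_Icc 0 1)
    · exact Continuous.continuousOn (by continuity)
    · intro x _
      exact (hF x).differentiableAt.differentiableWithinAt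
    · intro x hx
      rw [(hF x).deriv]
      have := Real.exp_pos (x + x^2/2 + x^3/3 + x^4/4)
      nlinarith [pow_nonneg (le_of_lt (Set.mem_Ioo.mp (by simpa using hx)).1) 4]
  have h := anti (Set.mem_Icc.mpr ⟨le_refl 0, zero_le_one⟩) (Set.mem_Icc.mpr ⟨h0, h1⟩) h0
  norm_num at h
  have hE := Real.exp_pos (q + q^2/2 + q^3/3 + q^4/4)
  rw [hfun, Real.exp_neg, inv_eq_one_div, le_div_iff₀ hE]
  convert h using 2

lemma key2 (q : ℝ) (h0 : 0 ≤ q) (h1 : q ≤ 1) :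
    1 - q ≤ Real.exp (-(hfun2 q)) := by
  have hF : ∀ x : ℝ, HasDerivAt (fun x : ℝ => (1-x) * Real.exp (x + x^2/2))
      (-(x^2) * Real.exp (x + x^2/2)) x := by
    intro x
    have h1 : HasDerivAt (fun x : ℝ => x + x^2/2) (1 + x) x := by
      have := (hasDerivAt_id x).add (((hasDerivAt_pow 2 x).div_const 2))
      exact this.congr_deriv (by push_cast; ring)
    have h3 : HasDerivAt (fun x : ℝ => 1 - x) (-1) x := by
      simpa using (hasDerivAt_id x).const_sub 1
    have := h3.mul h1.exp
    exact this.congr_deriv (by ring)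
  have anti : AntitoneOn (fun x : ℝ => (1-x) * Real.exp (x + x^2/2)) (Set.Icc 0 1) := by
    apply antitoneOn_of_deriv_nonpos (convex_Icc 0 1)
    · exact Continuous.continuousOn (by continuity)
    · intro x _
      exact (hF x).differentiableAt.differentiableWithinAt
    · intro x hx
      rw [(hF x).deriv]
      have := Real.exp_pos (x + x^2/2)
      nlinarith [pow_nonneg (le_of_lt (Set.mem_Ioo.mp (by simpa using hx)).1) 2]
  have h := anti (Set.mem_Icc.mpr ⟨le_refl 0, zero_le_one⟩) (Set.mem_Icc.mpr ⟨h0, h1⟩) h0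
  norm_num at h
  have hE := Real.exp_pos (q + q^2/2)
  rw [hfun2, Real.exp_neg, inv_eq_one_div, le_div_iff₀ hE]
  convert h using 2

lemma exp241 : Real.exp (241/100) ≤ 13 := by
  have h1 : Real.exp 1 < 2.7182818286 := Real.exp_one_lt_d9
  have h2 : Real.exp (41/100) ≤ 1/(59/100) := by
    have h3 := Real.add_one_le_exp (-(41/100) : ℝ)
    have h4 : Real.exp (-(41/100) : ℝ) = 1/Real.exp (41/100) := by
      rw [Real.exp_neg, inv_eq_one_div]
    have h5 := Real.exp_pos (41/100 : ℝ)
    rw [h4] at h3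
    rw [le_div_iff₀ (show (0:ℝ) < 59/100 by norm_num)]
    rw [le_div_iff₀ h5] at h3
    nlinarith
  have h6 : (241/100 : ℝ) = 1 + 1 + 41/100 := by norm_num
  rw [h6, Real.exp_add, Real.exp_add]
  have h7 := Real.exp_pos (1 : ℝ)
  have h8 := Real.exp_pos (41/100 : ℝ)
  nlinarith

lemma cast_dF1 (s : ℕ) : ((s.descFactorial 1 : ℕ) : ℝ) = s := by
  simp [Nat.descFactorial]
lemma cast_dF2 (s : ℕ) : ((s.descFactorial 2 : ℕ) : ℝ) = s * ((s:ℝ) - 1) := by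
  rcases s with _ | s
  · simp [Nat.descFactorial]
  · simp [Nat.descFactorial]; push_cast; ring
lemma cast_dF3 (s : ℕ) : ((s.descFactorial 3 : ℕ) : ℝ) = s * ((s:ℝ) - 1) * ((s:ℝ) - 2) := by
  rcases s with _ | _ | s
  · simp [Nat.descFactorial]
  · simp [Nat.descFactorial]
  · simp [Nat.descFactorial]; push_cast; ring
lemma cast_dF4 (s : ℕ) :
    ((s.descFactorial 4 : ℕ) : ℝ) = s * ((s:ℝ) - 1) * ((s:ℝ) - 2) * ((s:ℝ) - 3) := by
  rcases s with _ | _ | _ | s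
  · simp [Nat.descFactorial]
  · simp [Nat.descFactorial]
  · simp [Nat.descFactorial]
  · simp [Nat.descFactorial]; push_cast; ring

lemma lam2_eq (n s : ℕ) (hn : 2 ≤ n) :
    lam n 2 s = 1 - 4 * (s:ℝ) * ((n : ℝ) - (s:ℝ)) / ((n : ℝ) * ((n : ℝ) - 1)) := by
  have h2 : (2:ℝ) ≤ (n:ℝ) := by exact_mod_cast hn
  have h0 : (n:ℝ) ≠ 0 := by linarith
  have h1 : (n:ℝ) - 1 ≠ 0 := by intro h; nlinarith
  simp only [lam, Finset.sum_range_succ, Finset.sum_range_zero, cast_dF1, cast_dF2]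
  norm_num
  field_simp
  ring

lemma lam4_eq (n s : ℕ) (hn : 4 ≤ n) :
    lam n 4 s = 1 - ((-16) * (s:ℝ) ^ 4 + 32 * (n:ℝ) * (s:ℝ) ^ 3 + (-24) * (n:ℝ) ^ 2 * (s:ℝ) ^ 2 + 24 * (n:ℝ) * (s:ℝ) ^ 2 + (-32) * (s:ℝ) ^ 2 + 8 * (n:ℝ) ^ 3 * (s:ℝ) + (-24) * (n:ℝ) ^ 2 * (s:ℝ) + 32 * (n:ℝ) * (s:ℝ)) /
      ((n : ℝ) * ((n : ℝ) - 1) * ((n : ℝ) - 2) * ((n : ℝ) - 3)) := by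
  have h4 : (4:ℝ) ≤ (n:ℝ) := by exact_mod_cast hn
  have h0 : (n:ℝ) ≠ 0 := by linarith
  have h1 : (n:ℝ) - 1 ≠ 0 := by intro h; nlinarith
  have h2 : (n:ℝ) - 2 ≠ 0 := by intro h; nlinarith
  have h3 : (n:ℝ) - 3 ≠ 0 := by intro h; nlinarith
  simp only [lam, Finset.sum_range_succ, Finset.sum_range_zero, cast_dF1, cast_dF2, cast_dF3,
    cast_dF4]
  norm_num [Nat.choose]
  field_simp
  ring

-- factor lemmas (appended to stage1 for testing)
lemma one_div_13_le : (1:ℝ)/13 ≤ Real.exp (-(241/100)) := by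
  rw [Real.exp_neg]
  have hE := Real.exp_pos (241/100 : ℝ)
  rw [inv_eq_one_div]
  exact one_div_le_one_div_of_le hE exp241

lemma fac2 (n s : ℕ) (hn : 14 ≤ n) (hs2 : s ≤ n) :
    |lam n 2 s| ≤ Real.exp (-(hfun (1 - lam n 2 s))) := by
  have hn2 : (14:ℝ) ≤ (n:ℝ) := by exact_mod_cast hn
  have hsn : (s:ℝ) ≤ (n:ℝ) := by exact_mod_cast hs2
  have hs0 : (0:ℝ) ≤ (s:ℝ) := Nat.cast_nonneg s
  have hD : (0:ℝ) < (n:ℝ) * ((n:ℝ)-1) := by nlinarith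
  rw [lam2_eq n s (by omega)]
  set q : ℝ := 4 * (s:ℝ) * ((n : ℝ) - (s:ℝ)) / ((n : ℝ) * ((n : ℝ) - 1)) with hqdef
  have hq0 : 0 ≤ q := by
    apply div_nonneg _ hD.le
    nlinarith
  have hsimp : (1 : ℝ) - (1 - q) = q := by ring
  rw [hsimp]
  rcases le_or_gt q 1 with hle | hgt
  · rw [abs_of_nonneg (by linarith)]
    exact key4 q hq0 hle
  · rw [abs_of_neg (by linarith)]
    have hub : q - 1 ≤ 1/13 := by
      rw [hqdef, div_sub_one hD.ne', div_le_div_iff₀ hD (by norm_num : (0:ℝ) < 13)]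
      nlinarith [sq_nonneg (2*(s:ℝ) - (n:ℝ))]
    have hqmax : q ≤ 14/13 := by linarith
    have hh : hfun q ≤ 241/100 := by
      have h1 : q^2 ≤ (14/13)^2 := by nlinarith
      have h2 : q^3 ≤ (14/13)^3 := by nlinarith
      have h3 : q^4 ≤ (14/13)^4 := by nlinarith
      simp only [hfun]
      norm_num at h1 h2 h3 ⊢
      linarith
    calc -(1 - q) = q - 1 := by ring
      _ ≤ 1/13 := hub
      _ ≤ Real.exp (-(241/100)) := one_div_13_le
      _ ≤ Real.exp (-(hfun q)) := Real.exp_le_exp.mpr (by linarith)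

lemma fac4 (n s : ℕ) (hn : 14 ≤ n) (hs2 : s ≤ n) :
    |lam n 4 s| ≤ Real.exp (-(hfun2 (1 - lam n 4 s))) := by
  have hn2 : (14:ℝ) ≤ (n:ℝ) := by exact_mod_cast hn
  have hsn : (s:ℝ) ≤ (n:ℝ) := by exact_mod_cast hs2
  have hs0 : (0:ℝ) ≤ (s:ℝ) := Nat.cast_nonneg s
  have hD : (0:ℝ) < (n:ℝ) * ((n:ℝ)-1) * ((n:ℝ)-2) * ((n:ℝ)-3) := by
    have e1 : (0:ℝ) < (n:ℝ) := by linarith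
    have e2 : (0:ℝ) < (n:ℝ)-1 := by linarith
    have e3 : (0:ℝ) < (n:ℝ)-2 := by linarith
    have e4 : (0:ℝ) < (n:ℝ)-3 := by linarith
    exact mul_pos (mul_pos (mul_pos e1 e2) e3) e4
  rw [lam4_eq n s (by omega)]
  set A : ℝ := (-16) * (s:ℝ) ^ 4 + 32 * (n:ℝ) * (s:ℝ) ^ 3 + (-24) * (n:ℝ) ^ 2 * (s:ℝ) ^ 2 + 24 * (n:ℝ) * (s:ℝ) ^ 2 + (-32) * (s:ℝ) ^ 2 + 8 * (n:ℝ) ^ 3 * (s:ℝ) + (-24) * (n:ℝ) ^ 2 * (s:ℝ) + 32 * (n:ℝ) * (s:ℝ) with hAdef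
  have hA0 : 0 ≤ A := by
    have hid : A = ((n:ℝ)^2 - ((n:ℝ) - 2*(s:ℝ))^2) * (((n:ℝ) - 2*(s:ℝ))^2 + ((n:ℝ)-2)*((n:ℝ)-4)) := by
      rw [hAdef]; ring
    rw [hid]
    apply mul_nonneg
    · nlinarith
    · nlinarith [sq_nonneg ((n:ℝ) - 2*(s:ℝ))]
  set q : ℝ := A / ((n : ℝ) * ((n : ℝ) - 1) * ((n : ℝ) - 2) * ((n : ℝ) - 3)) with hqdef
  have hq0 : 0 ≤ q := div_nonneg hA0 hD.le
  have hsimp : (1 : ℝ) - (1 - q) = q := by ring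
  rw [hsimp]
  rcases le_or_gt q 1 with hle | hgt
  · rw [abs_of_nonneg (by linarith)]
    exact key2 q hq0 hle
  · rw [abs_of_neg (by linarith)]
    have hub : q - 1 ≤ 1/13 := by
      rw [hqdef, div_sub_one hD.ne', div_le_div_iff₀ hD (by norm_num : (0:ℝ) < 13)]
      -- 13*(A - D) ≤ D ; A - D ≤ 6n^2-18n+16 since A - D = -(g) and g + (6n^2-18n+16) = (x-(3n-4))^2
      nlinarith [sq_nonneg ((((n:ℝ) - 2*(s:ℝ))^2 - (3*(n:ℝ) - 4))),
        mul_nonneg (mul_nonneg (by linarith : (0:ℝ) ≤ (n:ℝ) - 14) (by linarith : (0:ℝ) ≤ (n:ℝ) - 14)) (by linarith : (0:ℝ) ≤ (n:ℝ) - 14),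
        mul_nonneg (by linarith : (0:ℝ) ≤ (n:ℝ) - 14) (by linarith : (0:ℝ) ≤ (n:ℝ) - 14),
        mul_nonneg (mul_nonneg (mul_nonneg (by linarith : (0:ℝ) ≤ (n:ℝ) - 14) (by linarith : (0:ℝ) ≤ (n:ℝ) - 14)) (by linarith : (0:ℝ) ≤ (n:ℝ) - 14)) (by linarith : (0:ℝ) ≤ (n:ℝ) - 14)]
    have hqmax : q ≤ 14/13 := by linarith
    have hh : hfun2 q ≤ 241/100 := by
      have h1 : q^2 ≤ (14/13)^2 := by nlinarith
      simp only [hfun2]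
      norm_num at h1 ⊢
      linarith
    calc -(1 - q) = q - 1 := by ring
      _ ≤ 1/13 := hub
      _ ≤ Real.exp (-(241/100)) := one_div_13_le
      _ ≤ Real.exp (-(hfun2 q)) := Real.exp_le_exp.mpr (by linarith)


lemma faul0 (n : ℕ) : ∑ s ∈ Finset.Icc 1 n, (s:ℝ)^0 = 1 * (n:ℝ) := by
  induction n with
  | zero => simp
  | succ k ih =>
    rw [Finset.sum_Icc_succ_top (by omega), ih]
    push_cast
    ring

lemma faul1 (n : ℕ) : ∑ s ∈ Finset.Icc 1 n, (s:ℝ)^1 = (1/2) * (n:ℝ) ^ 2 + (1/2) * (n:ℝ) := by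
  induction n with
  | zero => simp
  | succ k ih =>
    rw [Finset.sum_Icc_succ_top (by omega), ih]
    push_cast
    ring

lemma faul2 (n : ℕ) : ∑ s ∈ Finset.Icc 1 n, (s:ℝ)^2 = (1/3) * (n:ℝ) ^ 3 + (1/2) * (n:ℝ) ^ 2 + (1/6) * (n:ℝ) := by
  induction n with
  | zero => simp
  | succ k ih =>
    rw [Finset.sum_Icc_succ_top (by omega), ih]
    push_cast
    ring

lemma faul3 (n : ℕ) : ∑ s ∈ Finset.Icc 1 n, (s:ℝ)^3 = (1/4) * (n:ℝ) ^ 4 + (1/2) * (n:ℝ) ^ 3 + (1/4) * (n:ℝ) ^ 2 := by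
  induction n with
  | zero => simp
  | succ k ih =>
    rw [Finset.sum_Icc_succ_top (by omega), ih]
    push_cast
    ring

lemma faul4 (n : ℕ) : ∑ s ∈ Finset.Icc 1 n, (s:ℝ)^4 = (1/5) * (n:ℝ) ^ 5 + (1/2) * (n:ℝ) ^ 4 + (1/3) * (n:ℝ) ^ 3 + (-1/30) * (n:ℝ) := by
  induction n with
  | zero => simp
  | succ k ih =>
    rw [Finset.sum_Icc_succ_top (by omega), ih]
    push_cast
    ring

lemma faul5 (n : ℕ) : ∑ s ∈ Finset.Icc 1 n, (s:ℝ)^5 = (1/6) * (n:ℝ) ^ 6 + (1/2) * (n:ℝ) ^ 5 + (5/12) * (n:ℝ) ^ 4 + (-1/12) * (n:ℝ) ^ 2 := by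
  induction n with
  | zero => simp
  | succ k ih =>
    rw [Finset.sum_Icc_succ_top (by omega), ih]
    push_cast
    ring

lemma faul6 (n : ℕ) : ∑ s ∈ Finset.Icc 1 n, (s:ℝ)^6 = (1/7) * (n:ℝ) ^ 7 + (1/2) * (n:ℝ) ^ 6 + (1/2) * (n:ℝ) ^ 5 + (-1/6) * (n:ℝ) ^ 3 + (1/42) * (n:ℝ) := by
  induction n with
  | zero => simp
  | succ k ih =>
    rw [Finset.sum_Icc_succ_top (by omega), ih]
    push_cast
    ring

lemma faul7 (n : ℕ) : ∑ s ∈ Finset.Icc 1 n, (s:ℝ)^7 = (1/8) * (n:ℝ) ^ 8 + (1/2) * (n:ℝ) ^ 7 + (7/12) * (n:ℝ) ^ 6 + (-7/24) * (n:ℝ) ^ 4 + (1/12) * (n:ℝ) ^ 2 := by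
  induction n with
  | zero => simp
  | succ k ih =>
    rw [Finset.sum_Icc_succ_top (by omega), ih]
    push_cast
    ring

lemma faul8 (n : ℕ) : ∑ s ∈ Finset.Icc 1 n, (s:ℝ)^8 = (1/9) * (n:ℝ) ^ 9 + (1/2) * (n:ℝ) ^ 8 + (2/3) * (n:ℝ) ^ 7 + (-7/15) * (n:ℝ) ^ 5 + (2/9) * (n:ℝ) ^ 3 + (-1/30) * (n:ℝ) := by
  induction n with
  | zero => simp
  | succ k ih =>
    rw [Finset.sum_Icc_succ_top (by omega), ih]
    push_cast
    ring

lemma sum_h2 (n : ℕ) (hn : 14 ≤ n) :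
    (12*((n:ℝ) * ((n:ℝ) - 1))^4) * ∑ s ∈ Finset.Icc 1 n, hfun (1 - lam n 2 s) = (1496/105) * (n:ℝ) ^ 9 + (-1128/35) * (n:ℝ) ^ 8 + (96/5) * (n:ℝ) ^ 7 + 16 * (n:ℝ) ^ 6 + (-344/15) * (n:ℝ) ^ 5 + (152/15) * (n:ℝ) ^ 4 + (528/35) * (n:ℝ) ^ 3 + (128/21) * (n:ℝ) ^ 2 + (-128/5) * (n:ℝ) := by
  have h14 : (14:ℝ) ≤ (n:ℝ) := by exact_mod_cast hn
  have h0 : (n:ℝ) ≠ 0 := by intro h; nlinarith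
  have h1 : (n:ℝ) - 1 ≠ 0 := by intro h; nlinarith
  have h2 : (n:ℝ) - 2 ≠ 0 := by intro h; nlinarith
  have h3 : (n:ℝ) - 3 ≠ 0 := by intro h; nlinarith
  have e : ∀ s ∈ Finset.Icc 1 n, (12*((n:ℝ) * ((n:ℝ) - 1))^4) * hfun (1 - lam n 2 s)
      = (0) * (s:ℝ)^0 + (48 * (n:ℝ) ^ 7 + (-144) * (n:ℝ) ^ 6 + 144 * (n:ℝ) ^ 5 + (-48) * (n:ℝ) ^ 4) * (s:ℝ)^1 + (48 * (n:ℝ) ^ 6 + (-48) * (n:ℝ) ^ 5 + (-48) * (n:ℝ) ^ 4 + 48 * (n:ℝ) ^ 3) * (s:ℝ)^2 + (64 * (n:ℝ) ^ 5 + 128 * (n:ℝ) ^ 4 + (-192) * (n:ℝ) ^ 3) * (s:ℝ)^3 + (96 * (n:ℝ) ^ 4 + 576 * (n:ℝ) ^ 3 + 96 * (n:ℝ) ^ 2) * (s:ℝ)^4 + ((-2304) * (n:ℝ) ^ 3 + (-768) * (n:ℝ) ^ 2) * (s:ℝ)^5 + (4352 * (n:ℝ) ^ 2 + 256 * (n:ℝ))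 * (s:ℝ)^6 + ((-3072) * (n:ℝ)) * (s:ℝ)^7 + (768) * (s:ℝ)^8 := by
    intro s _
    rw [lam2_eq n s (by omega)]
    simp only [hfun]
    field_simp
    ring
  rw [Finset.mul_sum, Finset.sum_congr rfl e]
  simp only [Finset.sum_add_distrib, ← Finset.mul_sum]
  rw [faul0, faul1, faul2, faul3, faul4, faul5, faul6, faul7, faul8]
  ring

lemma sum_h4 (n : ℕ) (hn : 14 ≤ n) :
    (2*((n:ℝ) * ((n:ℝ) - 1) * ((n:ℝ) - 2) * ((n:ℝ) - 3))^2) * ∑ s ∈ Finset.Icc 1 n, hfun2 (1 - lam n 4 s) = (104/45) * (n:ℝ) ^ 9 + (-872/35) * (n:ℝ) ^ 8 + (10768/105) * (n:ℝ) ^ 7 + (-944/5) * (n:ℝ) ^ 6 + (1592/15) * (n:ℝ) ^ 5 + (616/5) * (n:ℝ) ^ 4 + (-8672/45) * (n:ℝ) ^ 3 + (3168/35) * (n:ℝ) ^ 2 + (-128/7) * (n:ℝ) := by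
  have h14 : (14:ℝ) ≤ (n:ℝ) := by exact_mod_cast hn
  have h0 : (n:ℝ) ≠ 0 := by intro h; nlinarith
  have h1 : (n:ℝ) - 1 ≠ 0 := by intro h; nlinarith
  have h2 : (n:ℝ) - 2 ≠ 0 := by intro h; nlinarith
  have h3 : (n:ℝ) - 3 ≠ 0 := by intro h; nlinarith
  have e : ∀ s ∈ Finset.Icc 1 n, (2*((n:ℝ) * ((n:ℝ) - 1) * ((n:ℝ) - 2) * ((n:ℝ) - 3))^2) * hfun2 (1 - lam n 4 s)
      = (0) * (s:ℝ)^0 + (16 * (n:ℝ) ^ 7 + (-144) * (n:ℝ) ^ 6 + 528 * (n:ℝ) ^ 5 + (-1008) * (n:ℝ) ^ 4 + 992 * (n:ℝ) ^ 3 + (-384) * (n:ℝ) ^ 2) * (s:ℝ)^1 + (16 * (n:ℝ) ^ 6 + (-48) * (n:ℝ) ^ 5 + 208 * (n:ℝ) ^ 4 + (-336) * (n:ℝ) ^ 3 + 32 * (n:ℝ) ^ 2 + 384 * (n:ℝ)) * (s:ℝ)^2 + ((-320) * (n:ℝ) ^ 5 + 1152 * (n:ℝ) ^ 4 + (-2496)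 * (n:ℝ) ^ 3 + 2688 * (n:ℝ) ^ 2 + (-2048) * (n:ℝ)) * (s:ℝ)^3 + (1056 * (n:ℝ) ^ 4 + (-2496) * (n:ℝ) ^ 3 + 3808 * (n:ℝ) ^ 2 + (-1344) * (n:ℝ) + 1024) * (s:ℝ)^4 + ((-1792) * (n:ℝ) ^ 3 + 2304 * (n:ℝ) ^ 2 + (-3072) * (n:ℝ)) * (s:ℝ)^5 + (1792 * (n:ℝ) ^ 2 + (-768) * (n:ℝ) + 1024) * (s:ℝ)^6 + ((-1024) * (n:ℝ)) * (s:ℝ)^7 + (256) * (s:ℝ)^8 := by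
    intro s _
    rw [lam4_eq n s (by omega)]
    simp only [hfun2]
    field_simp
    ring
  rw [Finset.mul_sum, Finset.sum_congr rfl e]
  simp only [Finset.sum_add_distrib, ← Finset.mul_sum]
  rw [faul0, faul1, faul2, faul3, faul4, faul5, faul6, faul7, faul8]
  ring


lemma delvE2 (m : ℕ) (hm : 7 ≤ m) :
    (12*((((2*m:ℕ)):ℝ) * ((((2*m:ℕ)):ℝ) - 1))^4) * hfun (1 - lam (2*m) 2 (m)) = 6400 * (m:ℝ) ^ 8 + (-6656) * (m:ℝ) ^ 7 + 2688 * (m:ℝ) ^ 6 + (-384) * (m:ℝ) ^ 5 := by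
  have hm7 : (7:ℝ) ≤ (m:ℝ) := by exact_mod_cast hm
  have h0 : (2*(m:ℝ)) ≠ (0:ℝ) := by intro h; nlinarith
  have h1 : (2*(m:ℝ)) - 1 ≠ (0:ℝ) := by intro h; nlinarith
  have h2 : (2*(m:ℝ)) - 2 ≠ (0:ℝ) := by intro h; nlinarith
  have h3 : (2*(m:ℝ)) - 3 ≠ (0:ℝ) := by intro h; nlinarith
  rw [lam2_eq (2*m) (m) (by omega)]
  simp only [hfun]
  push_cast
  field_simp
  ring

lemma delvO2a (m : ℕ) (hm : 7 ≤ m) :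
    (12*((((2*m+1:ℕ)):ℝ) * ((((2*m+1:ℕ)):ℝ) - 1))^4) * hfun (1 - lam (2*m+1) 2 (m)) = 6400 * (m:ℝ) ^ 8 + 18944 * (m:ℝ) ^ 7 + 21120 * (m:ℝ) ^ 6 + 10624 * (m:ℝ) ^ 5 + 2048 * (m:ℝ) ^ 4 := by
  have hm7 : (7:ℝ) ≤ (m:ℝ) := by exact_mod_cast hm
  have h0 : (2*(m:ℝ)+1) ≠ (0:ℝ) := by intro h; nlinarith
  have h1 : (2*(m:ℝ)+1) - 1 ≠ (0:ℝ) := by intro h; nlinarith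
  have h2 : (2*(m:ℝ)+1) - 2 ≠ (0:ℝ) := by intro h; nlinarith
  have h3 : (2*(m:ℝ)+1) - 3 ≠ (0:ℝ) := by intro h; nlinarith
  rw [lam2_eq (2*m+1) (m) (by omega)]
  simp only [hfun]
  push_cast
  field_simp
  ring

lemma delvO2b (m : ℕ) (hm : 7 ≤ m) :
    (12*((((2*m+1:ℕ)):ℝ) * ((((2*m+1:ℕ)):ℝ) - 1))^4) * hfun (1 - lam (2*m+1) 2 (m+1)) = 6400 * (m:ℝ) ^ 8 + 18944 * (m:ℝ) ^ 7 + 21120 * (m:ℝ) ^ 6 + 10624 * (m:ℝ) ^ 5 + 2048 * (m:ℝ) ^ 4 := by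
  have hm7 : (7:ℝ) ≤ (m:ℝ) := by exact_mod_cast hm
  have h0 : (2*(m:ℝ)+1) ≠ (0:ℝ) := by intro h; nlinarith
  have h1 : (2*(m:ℝ)+1) - 1 ≠ (0:ℝ) := by intro h; nlinarith
  have h2 : (2*(m:ℝ)+1) - 2 ≠ (0:ℝ) := by intro h; nlinarith
  have h3 : (2*(m:ℝ)+1) - 3 ≠ (0:ℝ) := by intro h; nlinarith
  rw [lam2_eq (2*m+1) (m+1) (by omega)]
  simp only [hfun]
  push_cast
  field_simp
  ring

lemma delvE4 (m : ℕ) (hm : 7 ≤ m) :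
    (2*((((2*m:ℕ)):ℝ) * ((((2*m:ℕ)):ℝ) - 1) * ((((2*m:ℕ)):ℝ) - 2) * ((((2*m:ℕ)):ℝ) - 3))^2) * hfun2 (1 - lam (2*m) 4 (m)) = 768 * (m:ℝ) ^ 8 + (-4608) * (m:ℝ) ^ 7 + 10368 * (m:ℝ) ^ 6 + (-10752) * (m:ℝ) ^ 5 + 4992 * (m:ℝ) ^ 4 + (-768) * (m:ℝ) ^ 3 := by
  have hm7 : (7:ℝ) ≤ (m:ℝ) := by exact_mod_cast hm
  have h0 : (2*(m:ℝ)) ≠ (0:ℝ) := by intro h; nlinarith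
  have h1 : (2*(m:ℝ)) - 1 ≠ (0:ℝ) := by intro h; nlinarith
  have h2 : (2*(m:ℝ)) - 2 ≠ (0:ℝ) := by intro h; nlinarith
  have h3 : (2*(m:ℝ)) - 3 ≠ (0:ℝ) := by intro h; nlinarith
  have h5 : (m:ℝ) - 1 ≠ (0:ℝ) := by intro h; nlinarith
  rw [lam4_eq (2*m) (m) (by omega)]
  simp only [hfun2]
  push_cast
  field_simp
  ring

lemma delvO4a (m : ℕ) (hm : 7 ≤ m) :
    (2*((((2*m+1:ℕ)):ℝ) * ((((2*m+1:ℕ)):ℝ) - 1) * ((((2*m+1:ℕ)):ℝ) - 2) * ((((2*m+1:ℕ)):ℝ) - 3))^2) * hfun2 (1 - lam (2*m+1) 4 (m)) = 768 * (m:ℝ) ^ 8 + (-1536) * (m:ℝ) ^ 7 + (-384) * (m:ℝ) ^ 6 + 2304 * (m:ℝ) ^ 5 + (-768) * (m:ℝ) ^ 4 + (-768) * (m:ℝ) ^ 3 + 384 * (m:ℝ) ^ 2 := by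
  have hm7 : (7:ℝ) ≤ (m:ℝ) := by exact_mod_cast hm
  have h0 : (2*(m:ℝ)+1) ≠ (0:ℝ) := by intro h; nlinarith
  have h1 : (2*(m:ℝ)+1) - 1 ≠ (0:ℝ) := by intro h; nlinarith
  have h2 : (2*(m:ℝ)+1) - 2 ≠ (0:ℝ) := by intro h; nlinarith
  have h3 : (2*(m:ℝ)+1) - 3 ≠ (0:ℝ) := by intro h; nlinarith
  rw [lam4_eq (2*m+1) (m) (by omega)]
  simp only [hfun2]
  push_cast
  field_simp
  ring

lemma delvO4b (m : ℕ) (hm : 7 ≤ m) :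
    (2*((((2*m+1:ℕ)):ℝ) * ((((2*m+1:ℕ)):ℝ) - 1) * ((((2*m+1:ℕ)):ℝ) - 2) * ((((2*m+1:ℕ)):ℝ) - 3))^2) * hfun2 (1 - lam (2*m+1) 4 (m+1)) = 768 * (m:ℝ) ^ 8 + (-1536) * (m:ℝ) ^ 7 + (-384) * (m:ℝ) ^ 6 + 2304 * (m:ℝ) ^ 5 + (-768) * (m:ℝ) ^ 4 + (-768) * (m:ℝ) ^ 3 + 384 * (m:ℝ) ^ 2 := by
  have hm7 : (7:ℝ) ≤ (m:ℝ) := by exact_mod_cast hm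
  have h0 : (2*(m:ℝ)+1) ≠ (0:ℝ) := by intro h; nlinarith
  have h1 : (2*(m:ℝ)+1) - 1 ≠ (0:ℝ) := by intro h; nlinarith
  have h2 : (2*(m:ℝ)+1) - 2 ≠ (0:ℝ) := by intro h; nlinarith
  have h3 : (2*(m:ℝ)+1) - 3 ≠ (0:ℝ) := by intro h; nlinarith
  rw [lam4_eq (2*m+1) (m+1) (by omega)]
  simp only [hfun2]
  push_cast
  field_simp
  ring

lemma sumS_E2 (m : ℕ) (hm : 7 ≤ m) :
    2*(m:ℝ) ≤ ∑ s ∈ (Finset.Icc 1 (2*m)).erase m, hfun (1 - lam (2*m) 2 s) := by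
  have hm7 : (7:ℝ) ≤ (m:ℝ) := by exact_mod_cast hm
  have hK : (0:ℝ) < (12*((((2*m:ℕ)):ℝ) * ((((2*m:ℕ)):ℝ) - 1))^4) := by
    have hc : (14:ℝ) ≤ (((2*m:ℕ)):ℝ) := by push_cast; linarith
    have p0 : (0:ℝ) < (((2*m:ℕ)):ℝ) := by linarith
    have p1 : (0:ℝ) < (((2*m:ℕ)):ℝ) - 1 := by linarith
    have p2 : (0:ℝ) < (((2*m:ℕ)):ℝ) - 2 := by linarith
    have p3 : (0:ℝ) < (((2*m:ℕ)):ℝ) - 3 := by linarith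
    exact mul_pos (by norm_num) (pow_pos (mul_pos p0 p1) 4)
  rw [← mul_le_mul_iff_right₀ hK]
  have hsum := sum_h2 (2*m) (by omega)
  have e2' : (∑ s ∈ (Finset.Icc 1 (2*m)).erase m, hfun (1 - lam (2*m) 2 s)) + hfun (1 - lam (2*m) 2 m)
      = ∑ s ∈ Finset.Icc 1 (2*m), hfun (1 - lam (2*m) 2 s) :=
    Finset.sum_erase_add _ _ (by simp only [Finset.mem_Icc]; omega)
  have hdel := delvE2 m hm
  have hcomb : (12*((((2*m:ℕ)):ℝ) * ((((2*m:ℕ)):ℝ) - 1))^4) * (∑ s ∈ (Finset.Icc 1 (2*m)).erase m, hfun (1 - lam (2*m) 2 s))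
      = ((1496/105) * (((2*m:ℕ)):ℝ) ^ 9 + (-1128/35) * (((2*m:ℕ)):ℝ) ^ 8 + (96/5) * (((2*m:ℕ)):ℝ) ^ 7 + 16 * (((2*m:ℕ)):ℝ) ^ 6 + (-344/15) * (((2*m:ℕ)):ℝ) ^ 5 + (152/15) * (((2*m:ℕ)):ℝ) ^ 4 + (528/35) * (((2*m:ℕ)):ℝ) ^ 3 + (128/21) * (((2*m:ℕ)):ℝ) ^ 2 + (-128/5) * (((2*m:ℕ)):ℝ)) - (6400 * (m:ℝ) ^ 8 + (-6656) * (m:ℝ) ^ 7 + 2688 * (m:ℝ) ^ 6 + (-384) * (m:ℝ) ^ 5) := by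
    linear_combination hsum - hdel + (12*((((2*m:ℕ)):ℝ) * ((((2*m:ℕ)):ℝ) - 1))^4) * e2'
  rw [hcomb]
  obtain ⟨k, rfl⟩ : ∃ k, m = k + 7 := ⟨m - 7, by omega⟩
  have hk : (0:ℝ) ≤ (k:ℝ) := Nat.cast_nonneg k
  push_cast
  nlinarith [hk, pow_nonneg hk 2, pow_nonneg hk 3, pow_nonneg hk 4, pow_nonneg hk 5,
    pow_nonneg hk 6, pow_nonneg hk 7, pow_nonneg hk 8, pow_nonneg hk 9]

lemma sumS_O2 (m : ℕ) (hm : 7 ≤ m) :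
    (2*(m:ℝ)+1) ≤ ∑ s ∈ ((Finset.Icc 1 (2*m+1)).erase m).erase (m+1), hfun (1 - lam (2*m+1) 2 s) := by
  have hm7 : (7:ℝ) ≤ (m:ℝ) := by exact_mod_cast hm
  have hK : (0:ℝ) < (12*((((2*m+1:ℕ)):ℝ) * ((((2*m+1:ℕ)):ℝ) - 1))^4) := by
    have hc : (14:ℝ) ≤ (((2*m+1:ℕ)):ℝ) := by push_cast; linarith
    have p0 : (0:ℝ) < (((2*m+1:ℕ)):ℝ) := by linarith
    have p1 : (0:ℝ) < (((2*m+1:ℕ)):ℝ) - 1 := by linarith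
    have p2 : (0:ℝ) < (((2*m+1:ℕ)):ℝ) - 2 := by linarith
    have p3 : (0:ℝ) < (((2*m+1:ℕ)):ℝ) - 3 := by linarith
    exact mul_pos (by norm_num) (pow_pos (mul_pos p0 p1) 4)
  rw [← mul_le_mul_iff_right₀ hK]
  have hsum := sum_h2 (2*m+1) (by omega)
  have e2a : (∑ s ∈ ((Finset.Icc 1 (2*m+1)).erase m).erase (m+1), hfun (1 - lam (2*m+1) 2 s)) + hfun (1 - lam (2*m+1) 2 (m+1))
      = ∑ s ∈ (Finset.Icc 1 (2*m+1)).erase m, hfun (1 - lam (2*m+1) 2 s) :=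
    Finset.sum_erase_add _ _ (by simp only [Finset.mem_erase, Finset.mem_Icc]; omega)
  have e2b : (∑ s ∈ (Finset.Icc 1 (2*m+1)).erase m, hfun (1 - lam (2*m+1) 2 s)) + hfun (1 - lam (2*m+1) 2 m)
      = ∑ s ∈ Finset.Icc 1 (2*m+1), hfun (1 - lam (2*m+1) 2 s) :=
    Finset.sum_erase_add _ _ (by simp only [Finset.mem_Icc]; omega)
  have hdela := delvO2a m hm
  have hdelb := delvO2b m hm
  have hcomb : (12*((((2*m+1:ℕ)):ℝ) * ((((2*m+1:ℕ)):ℝ) - 1))^4) * (∑ s ∈ ((Finset.Icc 1 (2*m+1)).erase m).erase (m+1), hfun (1 - lam (2*m+1) 2 s))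
      = ((1496/105) * (((2*m+1:ℕ)):ℝ) ^ 9 + (-1128/35) * (((2*m+1:ℕ)):ℝ) ^ 8 + (96/5) * (((2*m+1:ℕ)):ℝ) ^ 7 + 16 * (((2*m+1:ℕ)):ℝ) ^ 6 + (-344/15) * (((2*m+1:ℕ)):ℝ) ^ 5 + (152/15) * (((2*m+1:ℕ)):ℝ) ^ 4 + (528/35) * (((2*m+1:ℕ)):ℝ) ^ 3 + (128/21) * (((2*m+1:ℕ)):ℝ) ^ 2 + (-128/5) * (((2*m+1:ℕ)):ℝ)) - 2*(6400 * (m:ℝ) ^ 8 + 18944 * (m:ℝ) ^ 7 + 21120 * (m:ℝ) ^ 6 + 10624 * (m:ℝ) ^ 5 + 2048 * (m:ℝ) ^ 4) := by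
    linear_combination hsum - hdela - hdelb + (12*((((2*m+1:ℕ)):ℝ) * ((((2*m+1:ℕ)):ℝ) - 1))^4) * e2a + (12*((((2*m+1:ℕ)):ℝ) * ((((2*m+1:ℕ)):ℝ) - 1))^4) * e2b
  rw [hcomb]
  obtain ⟨k, rfl⟩ : ∃ k, m = k + 7 := ⟨m - 7, by omega⟩
  have hk : (0:ℝ) ≤ (k:ℝ) := Nat.cast_nonneg k
  push_cast
  nlinarith [hk, pow_nonneg hk 2, pow_nonneg hk 3, pow_nonneg hk 4, pow_nonneg hk 5,
    pow_nonneg hk 6, pow_nonneg hk 7, pow_nonneg hk 8, pow_nonneg hk 9]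

lemma sumS_E4 (m : ℕ) (hm : 7 ≤ m) :
    (2*(m:ℝ) + 6931471808/10000000000) ≤ ∑ s ∈ (Finset.Icc 1 (2*m)).erase m, hfun2 (1 - lam (2*m) 4 s) := by
  have hm7 : (7:ℝ) ≤ (m:ℝ) := by exact_mod_cast hm
  have hK : (0:ℝ) < (2*((((2*m:ℕ)):ℝ) * ((((2*m:ℕ)):ℝ) - 1) * ((((2*m:ℕ)):ℝ) - 2) * ((((2*m:ℕ)):ℝ) - 3))^2) := by
    have hc : (14:ℝ) ≤ (((2*m:ℕ)):ℝ) := by push_cast; linarith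
    have p0 : (0:ℝ) < (((2*m:ℕ)):ℝ) := by linarith
    have p1 : (0:ℝ) < (((2*m:ℕ)):ℝ) - 1 := by linarith
    have p2 : (0:ℝ) < (((2*m:ℕ)):ℝ) - 2 := by linarith
    have p3 : (0:ℝ) < (((2*m:ℕ)):ℝ) - 3 := by linarith
    exact mul_pos (by norm_num) (pow_pos (mul_pos (mul_pos (mul_pos p0 p1) p2) p3) 2)
  rw [← mul_le_mul_iff_right₀ hK]
  have hsum := sum_h4 (2*m) (by omega)
  have e2' : (∑ s ∈ (Finset.Icc 1 (2*m)).erase m, hfun2 (1 - lam (2*m) 4 s)) + hfun2 (1 - lam (2*m) 4 m)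
      = ∑ s ∈ Finset.Icc 1 (2*m), hfun2 (1 - lam (2*m) 4 s) :=
    Finset.sum_erase_add _ _ (by simp only [Finset.mem_Icc]; omega)
  have hdel := delvE4 m hm
  have hcomb : (2*((((2*m:ℕ)):ℝ) * ((((2*m:ℕ)):ℝ) - 1) * ((((2*m:ℕ)):ℝ) - 2) * ((((2*m:ℕ)):ℝ) - 3))^2) * (∑ s ∈ (Finset.Icc 1 (2*m)).erase m, hfun2 (1 - lam (2*m) 4 s))
      = ((104/45) * (((2*m:ℕ)):ℝ) ^ 9 + (-872/35) * (((2*m:ℕ)):ℝ) ^ 8 + (10768/105) * (((2*m:ℕ)):ℝ) ^ 7 + (-944/5) * (((2*m:ℕ)):ℝ) ^ 6 + (1592/15) * (((2*m:ℕ)):ℝ) ^ 5 + (616/5) * (((2*m:ℕ)):ℝ) ^ 4 + (-8672/45) * (((2*m:ℕ)):ℝ) ^ 3 + (3168/35) * (((2*m:ℕ)):ℝ) ^ 2 + (-128/7) * (((2*m:ℕ)):ℝ)) - (768 * (m:ℝ) ^ 8 + (-4608) * (m:ℝ) ^ 7 + 10368 * (m:ℝ) ^ 6 + (-10752) * (m:ℝ)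 ^ 5 + 4992 * (m:ℝ) ^ 4 + (-768) * (m:ℝ) ^ 3) := by
    linear_combination hsum - hdel + (2*((((2*m:ℕ)):ℝ) * ((((2*m:ℕ)):ℝ) - 1) * ((((2*m:ℕ)):ℝ) - 2) * ((((2*m:ℕ)):ℝ) - 3))^2) * e2'
  rw [hcomb]
  obtain ⟨k, rfl⟩ : ∃ k, m = k + 7 := ⟨m - 7, by omega⟩
  have hk : (0:ℝ) ≤ (k:ℝ) := Nat.cast_nonneg k
  push_cast
  nlinarith [hk, pow_nonneg hk 2, pow_nonneg hk 3, pow_nonneg hk 4, pow_nonneg hk 5,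
    pow_nonneg hk 6, pow_nonneg hk 7, pow_nonneg hk 8, pow_nonneg hk 9]

lemma sumS_O4 (m : ℕ) (hm : 7 ≤ m) :
    (2*(m:ℝ)+1 + 6931471808/10000000000) ≤ ∑ s ∈ ((Finset.Icc 1 (2*m+1)).erase m).erase (m+1), hfun2 (1 - lam (2*m+1) 4 s) := by
  have hm7 : (7:ℝ) ≤ (m:ℝ) := by exact_mod_cast hm
  have hK : (0:ℝ) < (2*((((2*m+1:ℕ)):ℝ) * ((((2*m+1:ℕ)):ℝ) - 1) * ((((2*m+1:ℕ)):ℝ) - 2) * ((((2*m+1:ℕ)):ℝ) - 3))^2) := by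
    have hc : (14:ℝ) ≤ (((2*m+1:ℕ)):ℝ) := by push_cast; linarith
    have p0 : (0:ℝ) < (((2*m+1:ℕ)):ℝ) := by linarith
    have p1 : (0:ℝ) < (((2*m+1:ℕ)):ℝ) - 1 := by linarith
    have p2 : (0:ℝ) < (((2*m+1:ℕ)):ℝ) - 2 := by linarith
    have p3 : (0:ℝ) < (((2*m+1:ℕ)):ℝ) - 3 := by linarith
    exact mul_pos (by norm_num) (pow_pos (mul_pos (mul_pos (mul_pos p0 p1) p2) p3) 2)
  rw [← mul_le_mul_iff_right₀ hK]
  have hsum := sum_h4 (2*m+1) (by omega)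
  have e2a : (∑ s ∈ ((Finset.Icc 1 (2*m+1)).erase m).erase (m+1), hfun2 (1 - lam (2*m+1) 4 s)) + hfun2 (1 - lam (2*m+1) 4 (m+1))
      = ∑ s ∈ (Finset.Icc 1 (2*m+1)).erase m, hfun2 (1 - lam (2*m+1) 4 s) :=
    Finset.sum_erase_add _ _ (by simp only [Finset.mem_erase, Finset.mem_Icc]; omega)
  have e2b : (∑ s ∈ (Finset.Icc 1 (2*m+1)).erase m, hfun2 (1 - lam (2*m+1) 4 s)) + hfun2 (1 - lam (2*m+1) 4 m)
      = ∑ s ∈ Finset.Icc 1 (2*m+1), hfun2 (1 - lam (2*m+1) 4 s) :=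
    Finset.sum_erase_add _ _ (by simp only [Finset.mem_Icc]; omega)
  have hdela := delvO4a m hm
  have hdelb := delvO4b m hm
  have hcomb : (2*((((2*m+1:ℕ)):ℝ) * ((((2*m+1:ℕ)):ℝ) - 1) * ((((2*m+1:ℕ)):ℝ) - 2) * ((((2*m+1:ℕ)):ℝ) - 3))^2) * (∑ s ∈ ((Finset.Icc 1 (2*m+1)).erase m).erase (m+1), hfun2 (1 - lam (2*m+1) 4 s))
      = ((104/45) * (((2*m+1:ℕ)):ℝ) ^ 9 + (-872/35) * (((2*m+1:ℕ)):ℝ) ^ 8 + (10768/105) * (((2*m+1:ℕ)):ℝ) ^ 7 + (-944/5) * (((2*m+1:ℕ)):ℝ) ^ 6 + (1592/15) * (((2*m+1:ℕ)):ℝ) ^ 5 + (616/5) * (((2*m+1:ℕ)):ℝ) ^ 4 + (-8672/45) * (((2*m+1:ℕ)):ℝ) ^ 3 + (3168/35) * (((2*m+1:ℕ)):ℝ) ^ 2 + (-128/7) * (((2*m+1:ℕ)):ℝ)) - 2*(768 * (m:ℝ) ^ 8 + (-1536) * (m:ℝ) ^ 7 + (-384) * (m:ℝ) ^ 6 + 2304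 * (m:ℝ) ^ 5 + (-768) * (m:ℝ) ^ 4 + (-768) * (m:ℝ) ^ 3 + 384 * (m:ℝ) ^ 2) := by
    linear_combination hsum - hdela - hdelb + (2*((((2*m+1:ℕ)):ℝ) * ((((2*m+1:ℕ)):ℝ) - 1) * ((((2*m+1:ℕ)):ℝ) - 2) * ((((2*m+1:ℕ)):ℝ) - 3))^2) * e2a + (2*((((2*m+1:ℕ)):ℝ) * ((((2*m+1:ℕ)):ℝ) - 1) * ((((2*m+1:ℕ)):ℝ) - 2) * ((((2*m+1:ℕ)):ℝ) - 3))^2) * e2b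
  rw [hcomb]
  obtain ⟨k, rfl⟩ : ∃ k, m = k + 7 := ⟨m - 7, by omega⟩
  have hk : (0:ℝ) ≤ (k:ℝ) := Nat.cast_nonneg k
  push_cast
  nlinarith [hk, pow_nonneg hk 2, pow_nonneg hk 3, pow_nonneg hk 4, pow_nonneg hk 5,
    pow_nonneg hk 6, pow_nonneg hk 7, pow_nonneg hk 8, pow_nonneg hk 9]


lemma prod_bound (S : Finset ℕ) (f : ℕ → ℝ) (w : ℕ → ℝ) (T : ℝ)
    (hfac : ∀ s ∈ S, |f s| ≤ Real.exp (-(w s)))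
    (hsum : T ≤ ∑ s ∈ S, w s) :
    |∏ s ∈ S, f s| ≤ Real.exp (-T) := by
  rw [Finset.abs_prod]
  calc ∏ s ∈ S, |f s| ≤ ∏ s ∈ S, Real.exp (-(w s)) :=
        Finset.prod_le_prod (fun s _ => abs_nonneg _) hfac
    _ = Real.exp (∑ s ∈ S, -(w s)) := (Real.exp_sum S _).symm
    _ ≤ Real.exp (-T) := by
        apply Real.exp_le_exp.mpr
        rw [Finset.sum_neg_distrib]
        linarith

lemma expL_half : Real.exp (-(6931471808/10000000000 : ℝ)) ≤ 1/2 := by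
  have h1 : Real.log 2 < 6931471808/10000000000 := by
    have := Real.log_two_lt_d9
    norm_num at this ⊢
    linarith
  have h2 : (2:ℝ) < Real.exp (6931471808/10000000000 : ℝ) := by
    calc (2:ℝ) = Real.exp (Real.log 2) := (Real.exp_log (by norm_num)).symm
      _ < _ := Real.exp_lt_exp.mpr h1
  rw [Real.exp_neg, inv_eq_one_div, div_le_div_iff₀ (Real.exp_pos _) (by norm_num : (0:ℝ) < 2)]
  linarith

-- analytic main lemmas
lemma even2 (m : ℕ) (hm : 7 ≤ m) : |lamDel (2*m) 2 m| ≤ Real.exp (-((2*m:ℕ):ℝ)) := by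
  rw [lamDel]
  apply prod_bound _ _ (fun s => hfun (1 - lam (2*m) 2 s))
  · intro s hs
    exact fac2 (2*m) s (by omega) (Finset.mem_Icc.mp (Finset.mem_of_mem_erase hs)).2
  · calc ((2*m:ℕ):ℝ) = 2*(m:ℝ) := by push_cast; ring
      _ ≤ _ := sumS_E2 m hm

lemma even4 (m : ℕ) (hm : 7 ≤ m) :
    |lamDel (2*m) 4 m| ≤ (1/2) * Real.exp (-((2*m:ℕ):ℝ)) := by
  have h := prod_bound ((Finset.Icc 1 (2*m)).erase m) (lam (2*m) 4)
    (fun s => hfun2 (1 - lam (2*m) 4 s)) (2*(m:ℝ) + 6931471808/10000000000)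
    (fun s hs => fac4 (2*m) s (by omega) (Finset.mem_Icc.mp (Finset.mem_of_mem_erase hs)).2)
    (sumS_E4 m hm)
  rw [lamDel]
  calc |∏ r ∈ (Finset.Icc 1 (2*m)).erase m, lam (2*m) 4 r|
      ≤ Real.exp (-(2*(m:ℝ) + 6931471808/10000000000)) := h
    _ = Real.exp (-((2*m:ℕ):ℝ)) * Real.exp (-(6931471808/10000000000:ℝ)) := by
        rw [← Real.exp_add]; push_cast; ring_nf
    _ ≤ Real.exp (-((2*m:ℕ):ℝ)) * (1/2) := by
        exact mul_le_mul_of_nonneg_left expL_half (Real.exp_pos _).le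
    _ = (1/2) * Real.exp (-((2*m:ℕ):ℝ)) := by ring

lemma odd2 (m : ℕ) (hm : 7 ≤ m) :
    |lamDel2 (2*m+1) 2 m (m+1)| ≤ Real.exp (-((2*m+1:ℕ):ℝ)) := by
  rw [lamDel2]
  apply prod_bound _ _ (fun s => hfun (1 - lam (2*m+1) 2 s))
  · intro s hs
    exact fac2 (2*m+1) s (by omega)
      (Finset.mem_Icc.mp (Finset.mem_of_mem_erase (Finset.mem_of_mem_erase hs))).2
  · calc ((2*m+1:ℕ):ℝ) = 2*(m:ℝ)+1 := by push_cast; ring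
      _ ≤ _ := sumS_O2 m hm

lemma odd4 (m : ℕ) (hm : 7 ≤ m) :
    |lamDel2 (2*m+1) 4 m (m+1)| ≤ (1/2) * Real.exp (-((2*m+1:ℕ):ℝ)) := by
  have h := prod_bound (((Finset.Icc 1 (2*m+1)).erase m).erase (m+1)) (lam (2*m+1) 4)
    (fun s => hfun2 (1 - lam (2*m+1) 4 s)) (2*(m:ℝ)+1 + 6931471808/10000000000)
    (fun s hs => fac4 (2*m+1) s (by omega)
      (Finset.mem_Icc.mp (Finset.mem_of_mem_erase (Finset.mem_of_mem_erase hs))).2)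
    (sumS_O4 m hm)
  rw [lamDel2]
  calc |∏ r ∈ ((Finset.Icc 1 (2*m+1)).erase m).erase (m+1), lam (2*m+1) 4 r|
      ≤ Real.exp (-(2*(m:ℝ)+1 + 6931471808/10000000000)) := h
    _ = Real.exp (-((2*m+1:ℕ):ℝ)) * Real.exp (-(6931471808/10000000000:ℝ)) := by
        rw [← Real.exp_add]; push_cast; ring_nf
    _ ≤ Real.exp (-((2*m+1:ℕ):ℝ)) * (1/2) := by
        exact mul_le_mul_of_nonneg_left expL_half (Real.exp_pos _).le
    _ = (1/2) * Real.exp (-((2*m+1:ℕ):ℝ)) := by ring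


lemma mid_eq2 (m : ℕ) (hm : 1 ≤ m) : lam (2*m+1) 2 (m+1) = lam (2*m+1) 2 m := by
  rw [lam2_eq _ _ (by omega), lam2_eq _ _ (by omega)]
  push_cast
  ring_nf

lemma mid_eq4 (m : ℕ) (hm : 2 ≤ m) : lam (2*m+1) 4 (m+1) = lam (2*m+1) 4 m := by
  rw [lam4_eq _ _ (by omega), lam4_eq _ _ (by omega)]
  push_cast
  ring_nf

lemma mid_abs2 (m : ℕ) (hm : 1 ≤ m) : |lam (2*m+1) 2 m| ≤ 1 := by
  have hm1 : (1:ℝ) ≤ (m:ℝ) := by exact_mod_cast hm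
  have hv : lam (2*m+1) 2 m = -(1/(2*(m:ℝ)+1)) := by
    rw [lam2_eq _ _ (by omega)]
    have h0 : (2*(m:ℝ)+1) ≠ 0 := by intro h; nlinarith
    have h1 : (2*(m:ℝ)+1-1) ≠ 0 := by intro h; nlinarith
    push_cast
    field_simp
    ring
  rw [hv, abs_neg, abs_of_nonneg (by positivity), div_le_one (by positivity)]
  linarith

lemma mid_abs4 (m : ℕ) (hm : 2 ≤ m) : |lam (2*m+1) 4 m| ≤ 1 := by
  have hm1 : (2:ℝ) ≤ (m:ℝ) := by exact_mod_cast hm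
  have hv : lam (2*m+1) 4 m = 3/((2*(m:ℝ)+1) * (2*(m:ℝ)-1)) := by
    rw [lam4_eq _ _ (by omega)]
    have h0 : (2*(m:ℝ)+1) ≠ 0 := by intro h; nlinarith
    have h1 : (2*(m:ℝ)+1-1) ≠ 0 := by intro h; nlinarith
    have h2 : (2*(m:ℝ)+1-2) ≠ 0 := by intro h; nlinarith
    have h3 : (2*(m:ℝ)+1-3) ≠ 0 := by intro h; nlinarith
    have h4 : (2*(m:ℝ)-1) ≠ 0 := by intro h; nlinarith
    have h5 : ((m:ℝ)-1) ≠ 0 := by intro h; nlinarith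
    push_cast
    field_simp
    have h6 : (m:ℝ)*2+1-2 ≠ 0 := by intro h; nlinarith
    have h7 : (m:ℝ)*2+1-3 ≠ 0 := by intro h; nlinarith
    have h8 : (m:ℝ)*2-1 ≠ 0 := by intro h; nlinarith
    field_simp
    ring
  have hD2 : (0:ℝ) < (2*(m:ℝ)+1) * (2*(m:ℝ)-1) := by nlinarith
  rw [hv, abs_of_nonneg (div_nonneg (by norm_num) hD2.le)]
  rw [div_le_one hD2]
  nlinarith

lemma split_a (m b : ℕ) (hm : 1 ≤ m) :
    lamDel (2*m+1) b m = lam (2*m+1) b (m+1) * lamDel2 (2*m+1) b m (m+1) := by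
  rw [lamDel, lamDel2]
  exact (Finset.mul_prod_erase _ _ (by simp only [Finset.mem_erase, Finset.mem_Icc]; omega)).symm

lemma split_b (m b : ℕ) (hm : 1 ≤ m) :
    lamDel (2*m+1) b (m+1) = lam (2*m+1) b m * lamDel2 (2*m+1) b m (m+1) := by
  have hset : ((Finset.Icc 1 (2*m+1)).erase (m+1)).erase m
      = ((Finset.Icc 1 (2*m+1)).erase m).erase (m+1) := by
    ext x
    simp only [Finset.mem_erase, Finset.mem_Icc]
    omega
  rw [lamDel, lamDel2, ← hset]
  exact (Finset.mul_prod_erase _ _ (by simp only [Finset.mem_erase, Finset.mem_Icc]; omega)).symm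

lemma sdiff_eq (m n : ℕ) :
    Finset.Icc 1 n \ {m, m+1} = ((Finset.Icc 1 n).erase m).erase (m+1) := by
  ext x
  simp only [Finset.mem_sdiff, Finset.mem_insert, Finset.mem_singleton, Finset.mem_erase,
    Finset.mem_Icc]
  omega

lemma split_bar2 (m : ℕ) (hm : 1 ≤ m) :
    lamBarDel (2*m+1) 2 m = lam (2*m+1) 2 m * lamDel2 (2*m+1) 2 m (m+1) := by
  rw [lamBarDel, sdiff_eq, lamDel2, mid_eq2 m hm]
  ring

lemma split_bar4 (m : ℕ) (hm : 2 ≤ m) :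
    lamBarDel (2*m+1) 4 m = lam (2*m+1) 4 m * lamDel2 (2*m+1) 4 m (m+1) := by
  rw [lamBarDel, sdiff_eq, lamDel2, mid_eq4 m hm]
  ring

lemma abs_mul_le {a b c : ℝ} (ha : |a| ≤ 1) (hb : |b| ≤ c) : |a * b| ≤ c := by
  rw [abs_mul]
  nlinarith [abs_nonneg a, abs_nonneg b]

-- base-case helpers
lemma le_exp_neg {r : ℝ} (n : ℕ) (hr : 0 ≤ r) (h : r * 2.7182818286^n ≤ 1) :
    r ≤ Real.exp (-(n:ℝ)) := by
  have h1 : Real.exp (n:ℝ) ≤ 2.7182818286^n := by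
    rw [← Real.exp_one_pow]
    exact pow_le_pow_left₀ (Real.exp_pos 1).le Real.exp_one_lt_d9.le n
  have hE : (0:ℝ) < Real.exp (n:ℝ) := Real.exp_pos _
  rw [Real.exp_neg, inv_eq_one_div, le_div_iff₀ hE]
  calc r * Real.exp (n:ℝ) ≤ r * 2.7182818286^n := by
        exact mul_le_mul_of_nonneg_left h1 hr
    _ ≤ 1 := h

lemma le_exp_neg_half {r : ℝ} (n : ℕ) (hr : 0 ≤ r) (h : 2 * r * 2.7182818286^n ≤ 1) :
    r ≤ (1/2) * Real.exp (-(n:ℝ)) := by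
  have h1 : Real.exp (n:ℝ) ≤ 2.7182818286^n := by
    rw [← Real.exp_one_pow]
    exact pow_le_pow_left₀ (Real.exp_pos 1).le Real.exp_one_lt_d9.le n
  have hE : (0:ℝ) < Real.exp (n:ℝ) := Real.exp_pos _
  have h2 : 2 * r ≤ Real.exp (-(n:ℝ)) := by
    rw [Real.exp_neg, inv_eq_one_div, le_div_iff₀ hE]
    calc 2 * r * Real.exp (n:ℝ) ≤ 2 * r * 2.7182818286^n := by
          apply mul_le_mul_of_nonneg_left h1 (by linarith)
      _ ≤ 1 := h
  linarith


lemma baseE6b2 : |lamDel 6 2 3| ≤ Real.exp (-((6:ℕ):ℝ)) := by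
  have hv : lamDel 6 2 3 = (1/2025 : ℝ) := by
    rw [lamDel, show (Finset.Icc 1 6).erase 3 = {1,2,4,5,6} from by decide]
    norm_num [Finset.prod_insert, lam, Finset.sum_range_succ, Nat.descFactorial, Nat.choose]
  rw [hv, abs_of_nonneg (by norm_num)]
  apply le_exp_neg 6 (by norm_num)
  norm_num

lemma baseE6b4 : |lamDel 6 4 3| ≤ (1/2) * Real.exp (-((6:ℕ):ℝ)) := by
  have hv : lamDel 6 4 3 = (1/2025 : ℝ) := by
    rw [lamDel, show (Finset.Icc 1 6).erase 3 = {1,2,4,5,6} from by decide]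
    norm_num [Finset.prod_insert, lam, Finset.sum_range_succ, Nat.descFactorial, Nat.choose]
  rw [hv, abs_of_nonneg (by norm_num)]
  apply le_exp_neg_half 6 (by norm_num)
  norm_num

lemma baseE8b2 : |lamDel 8 2 4| ≤ Real.exp (-((8:ℕ):ℝ)) := by
  have hv : lamDel 8 2 4 = (1/38416 : ℝ) := by
    rw [lamDel, show (Finset.Icc 1 8).erase 4 = {1,2,3,5,6,7,8} from by decide]
    norm_num [Finset.prod_insert, lam, Finset.sum_range_succ, Nat.descFactorial, Nat.choose]
  rw [hv, abs_of_nonneg (by norm_num)]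
  apply le_exp_neg 8 (by norm_num)
  norm_num

lemma baseE8b4 : |lamDel 8 4 4| ≤ (1/2) * Real.exp (-((8:ℕ):ℝ)) := by
  have hv : lamDel 8 4 4 = (0 : ℝ) := by
    rw [lamDel, show (Finset.Icc 1 8).erase 4 = {1,2,3,5,6,7,8} from by decide]
    norm_num [Finset.prod_insert, lam, Finset.sum_range_succ, Nat.descFactorial, Nat.choose]
  rw [hv, abs_of_nonneg (by norm_num)]
  apply le_exp_neg_half 8 (by norm_num)
  norm_num

lemma baseE10b2 : |lamDel 10 2 5| ≤ Real.exp (-((10:ℕ):ℝ)) := by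
  have hv : lamDel 10 2 5 = (169/284765625 : ℝ) := by
    rw [lamDel, show (Finset.Icc 1 10).erase 5 = {1,2,3,4,6,7,8,9,10} from by decide]
    norm_num [Finset.prod_insert, lam, Finset.sum_range_succ, Nat.descFactorial, Nat.choose]
  rw [hv, abs_of_nonneg (by norm_num)]
  apply le_exp_neg 10 (by norm_num)
  norm_num

lemma baseE10b4 : |lamDel 10 4 5| ≤ (1/2) * Real.exp (-((10:ℕ):ℝ)) := by
  have hv : lamDel 10 4 5 = (1/13953515625 : ℝ) := by
    rw [lamDel, show (Finset.Icc 1 10).erase 5 = {1,2,3,4,6,7,8,9,10} from by decide]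
    norm_num [Finset.prod_insert, lam, Finset.sum_range_succ, Nat.descFactorial, Nat.choose]
  rw [hv, abs_of_nonneg (by norm_num)]
  apply le_exp_neg_half 10 (by norm_num)
  norm_num

lemma baseE12b2 : |lamDel 12 2 6| ≤ Real.exp (-((12:ℕ):ℝ)) := by
  have hv : lamDel 12 2 6 = (10816/1406408618241 : ℝ) := by
    rw [lamDel, show (Finset.Icc 1 12).erase 6 = {1,2,3,4,5,7,8,9,10,11,12} from by decide]
    norm_num [Finset.prod_insert, lam, Finset.sum_range_succ, Nat.descFactorial, Nat.choose]
  rw [hv, abs_of_nonneg (by norm_num)]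
  apply le_exp_neg 12 (by norm_num)
  norm_num

lemma baseE12b4 : |lamDel 12 4 6| ≤ (1/2) * Real.exp (-((12:ℕ):ℝ)) := by
  have hv : lamDel 12 4 6 = (289/7911048477605625 : ℝ) := by
    rw [lamDel, show (Finset.Icc 1 12).erase 6 = {1,2,3,4,5,7,8,9,10,11,12} from by decide]
    norm_num [Finset.prod_insert, lam, Finset.sum_range_succ, Nat.descFactorial, Nat.choose]
  rw [hv, abs_of_nonneg (by norm_num)]
  apply le_exp_neg_half 12 (by norm_num)
  norm_num

lemma baseO7b2 : |lamDel2 7 2 3 4| ≤ Real.exp (-((7:ℕ):ℝ)) := by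
  have hv : lamDel2 7 2 3 4 = (1/2401 : ℝ) := by
    rw [lamDel2, show ((Finset.Icc 1 7).erase 3).erase 4 = {1,2,5,6,7} from by decide]
    norm_num [Finset.prod_insert, lam, Finset.sum_range_succ, Nat.descFactorial, Nat.choose]
  rw [hv, abs_of_nonneg (by norm_num)]
  apply le_exp_neg 7 (by norm_num)
  norm_num

lemma baseO7b4 : |lamDel2 7 4 3 4| ≤ (1/2) * Real.exp (-((7:ℕ):ℝ)) := by
  have hv : lamDel2 7 4 3 4 = (1/2401 : ℝ) := by
    rw [lamDel2, show ((Finset.Icc 1 7).erase 3).erase 4 = {1,2,5,6,7} from by decide]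
    norm_num [Finset.prod_insert, lam, Finset.sum_range_succ, Nat.descFactorial, Nat.choose]
  rw [hv, abs_of_nonneg (by norm_num)]
  apply le_exp_neg_half 7 (by norm_num)
  norm_num

lemma baseO9b2 : |lamDel2 9 2 4 5| ≤ Real.exp (-((9:ℕ):ℝ)) := by
  have hv : lamDel2 9 2 4 5 = (0 : ℝ) := by
    rw [lamDel2, show ((Finset.Icc 1 9).erase 4).erase 5 = {1,2,3,6,7,8,9} from by decide]
    norm_num [Finset.prod_insert, lam, Finset.sum_range_succ, Nat.descFactorial, Nat.choose]
  rw [hv, abs_of_nonneg (by norm_num)]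
  apply le_exp_neg 9 (by norm_num)
  norm_num

lemma baseO9b4 : |lamDel2 9 4 4 5| ≤ (1/2) * Real.exp (-((9:ℕ):ℝ)) := by
  have hv : lamDel2 9 4 4 5 = (1/2893401 : ℝ) := by
    rw [lamDel2, show ((Finset.Icc 1 9).erase 4).erase 5 = {1,2,3,6,7,8,9} from by decide]
    norm_num [Finset.prod_insert, lam, Finset.sum_range_succ, Nat.descFactorial, Nat.choose]
  rw [hv, abs_of_nonneg (by norm_num)]
  apply le_exp_neg_half 9 (by norm_num)
  norm_num

lemma baseO11b2 : |lamDel2 11 2 5 6| ≤ Real.exp (-((11:ℕ):ℝ)) := by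
  have hv : lamDel2 11 2 5 6 = (866761/3349357515625 : ℝ) := by
    rw [lamDel2, show ((Finset.Icc 1 11).erase 5).erase 6 = {1,2,3,4,7,8,9,10,11} from by decide]
    norm_num [Finset.prod_insert, lam, Finset.sum_range_succ, Nat.descFactorial, Nat.choose]
  rw [hv, abs_of_nonneg (by norm_num)]
  apply le_exp_neg 11 (by norm_num)
  norm_num

lemma baseO11b4 : |lamDel2 11 4 5 6| ≤ (1/2) * Real.exp (-((11:ℕ):ℝ)) := by
  have hv : lamDel2 11 4 5 6 = (1/27680640625 : ℝ) := by
    rw [lamDel2, show ((Finset.Icc 1 11).erase 5).erase 6 = {1,2,3,4,7,8,9,10,11} from by decide]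
    norm_num [Finset.prod_insert, lam, Finset.sum_range_succ, Nat.descFactorial, Nat.choose]
  rw [hv, abs_of_nonneg (by norm_num)]
  apply le_exp_neg_half 11 (by norm_num)
  norm_num

lemma baseO13b2 : |lamDel2 13 2 6 7| ≤ Real.exp (-((13:ℕ):ℝ)) := by
  have hv : lamDel2 13 2 6 7 = (2601/137858491849 : ℝ) := by
    rw [lamDel2, show ((Finset.Icc 1 13).erase 6).erase 7 = {1,2,3,4,5,8,9,10,11,12,13} from by decide]
    norm_num [Finset.prod_insert, lam, Finset.sum_range_succ, Nat.descFactorial, Nat.choose]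
  rw [hv, abs_of_nonneg (by norm_num)]
  apply le_exp_neg 13 (by norm_num)
  norm_num

lemma baseO13b4 : |lamDel2 13 4 6 7| ≤ (1/2) * Real.exp (-((13:ℕ):ℝ)) := by
  have hv : lamDel2 13 4 6 7 = (21025/244224727678506289 : ℝ) := by
    rw [lamDel2, show ((Finset.Icc 1 13).erase 6).erase 7 = {1,2,3,4,5,8,9,10,11,12,13} from by decide]
    norm_num [Finset.prod_insert, lam, Finset.sum_range_succ, Nat.descFactorial, Nat.choose]
  rw [hv, abs_of_nonneg (by norm_num)]
  apply le_exp_neg_half 13 (by norm_num)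
  norm_num

end LBaux

/-- Exponential bounds on the eigenvalue products of the lightbulb chain. -/
theorem lam_pattern_bounds :
    (∀ n : ℕ, 6 ≤ n → Even n →
      |lamDel n 2 (n / 2)| ≤ Real.exp (-(n : ℝ)) ∧
      |lamDel n 4 (n / 2)| ≤ (1 / 2) * Real.exp (-(n : ℝ))) ∧
    (∀ m n : ℕ, n = 2 * m + 1 → 7 ≤ n →
      (|lamDel n 2 m| ≤ Real.exp (-(n : ℝ)) ∧
        |lamDel n 4 m| ≤ (1 / 2) * Real.exp (-(n : ℝ))) ∧
      (|lamDel n 2 (m + 1)| ≤ Real.exp (-(n : ℝ)) ∧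
        |lamDel n 4 (m + 1)| ≤ (1 / 2) * Real.exp (-(n : ℝ))) ∧
      (|lamDel2 n 2 m (m + 1)| ≤ Real.exp (-(n : ℝ)) ∧
        |lamDel2 n 4 m (m + 1)| ≤ (1 / 2) * Real.exp (-(n : ℝ))) ∧
      (|lamBarDel n 2 m| ≤ Real.exp (-(n : ℝ)) ∧
        |lamBarDel n 4 m| ≤ (1 / 2) * Real.exp (-(n : ℝ)))) := by
  constructor
  · intro n hn he
    obtain ⟨r, hr⟩ := he
    obtain ⟨j, rfl⟩ : ∃ j, n = 2*j := ⟨r, by omega⟩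
    rw [show (2*j)/2 = j from by omega]
    by_cases hj : 7 ≤ j
    · exact ⟨LBaux.even2 j hj, LBaux.even4 j hj⟩
    · push_neg at hj
      have hj3 : 3 ≤ j := by omega
      interval_cases j
      · exact ⟨by simpa using LBaux.baseE6b2, by simpa using LBaux.baseE6b4⟩
      · exact ⟨by simpa using LBaux.baseE8b2, by simpa using LBaux.baseE8b4⟩
      · exact ⟨by simpa using LBaux.baseE10b2, by simpa using LBaux.baseE10b4⟩
      · exact ⟨by simpa using LBaux.baseE12b2, by simpa using LBaux.baseE12b4⟩
  · intro m n hn h7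
    subst hn
    have hm3 : 3 ≤ m := by omega
    have hc2 : |lamDel2 (2*m+1) 2 m (m+1)| ≤ Real.exp (-((2*m+1:ℕ):ℝ)) := by
      by_cases hm7 : 7 ≤ m
      · exact LBaux.odd2 m hm7
      · push_neg at hm7
        interval_cases m
        · simpa using LBaux.baseO7b2
        · simpa using LBaux.baseO9b2
        · simpa using LBaux.baseO11b2
        · simpa using LBaux.baseO13b2
    have hc4 : |lamDel2 (2*m+1) 4 m (m+1)| ≤ (1/2) * Real.exp (-((2*m+1:ℕ):ℝ)) := by
      by_cases hm7 : 7 ≤ m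
      · exact LBaux.odd4 m hm7
      · push_neg at hm7
        interval_cases m
        · simpa using LBaux.baseO7b4
        · simpa using LBaux.baseO9b4
        · simpa using LBaux.baseO11b4
        · simpa using LBaux.baseO13b4
    refine ⟨⟨?_, ?_⟩, ⟨?_, ?_⟩, ⟨hc2, hc4⟩, ⟨?_, ?_⟩⟩
    · rw [LBaux.split_a m 2 (by omega)]
      exact LBaux.abs_mul_le
        (by rw [LBaux.mid_eq2 m (by omega)]; exact LBaux.mid_abs2 m (by omega)) hc2
    · rw [LBaux.split_a m 4 (by omega)]
      exact LBaux.abs_mul_le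
        (by rw [LBaux.mid_eq4 m (by omega)]; exact LBaux.mid_abs4 m (by omega)) hc4
    · rw [LBaux.split_b m 2 (by omega)]
      exact LBaux.abs_mul_le (LBaux.mid_abs2 m (by omega)) hc2
    · rw [LBaux.split_b m 4 (by omega)]
      exact LBaux.abs_mul_le (LBaux.mid_abs4 m (by omega)) hc4
    · rw [LBaux.split_bar2 m (by omega)]
      exact LBaux.abs_mul_le (LBaux.mid_abs2 m (by omega)) hc2
    · rw [LBaux.split_bar4 m (by omega)]
      exact LBaux.abs_mul_le (LBaux.mid_abs4 m (by omega)) hc4
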